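/- Consider the two-piece convex knapsack problem (CK) with the additional assumptions that γ_j ≤ 0 (so p_j(0) = 0) and u_j ≤ Ω for every j ∈ [n], and that the items are indexed in non-increasing profit-density order p_1(u_1)/u_1 ≥ p_2(u_2)/u_2 ≥ … ≥ p_n(u_n)/u_n. Define P_R = max { Σ_{j∈[k]} p_j(u_j) : k ∈ {0, 1, …, n}, Σ_{j∈[k]} u_j ≤ Ω } and P_min = max( max_{j∈[n]} p_j(u_j), P_R ). Then P_min ≤ P* ≤ 2·P_min. -/

import Mathlib

/-- Lemma 4 (bounds): with `γ_j ≤ 0`, `u_j ≤ Ω`, and items in non-increasing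
profit-density order, the greedy/trivial lower bound `P_min` satisfies
`P_min ≤ P* ≤ 2·P_min`. -/
theorem stmt_13 (n : ℕ) (hn : 1 ≤ n) (γ β u : Fin n → ℝ)
    (hβ : ∀ j, 0 < β j) (hu : ∀ j, 0 < u j) (hpos : ∀ j, 0 < γ j + β j * u j)
    (Ω : ℝ) (hΩ : 0 < Ω)
    (hγ : ∀ j, γ j ≤ 0) (huΩ : ∀ j, u j ≤ Ω)
    (hdens : ∀ i j : Fin n, i ≤ j →
      (γ j + β j * u j) / u j ≤ (γ i + β i * u i) / u i)
    (Pstar : ℝ)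
    (hPstar : IsGreatest ((fun x : Fin n → ℝ => ∑ j, max (γ j + β j * x j) 0) ''
        {x | (∀ j, 0 ≤ x j ∧ x j ≤ u j) ∧ ∑ j, x j ≤ Ω}) Pstar)
    (PR : ℝ)
    (hPR : IsGreatest {v : ℝ | ∃ k ≤ n,
        (∑ j ∈ Finset.univ.filter (fun j : Fin n => (j : ℕ) < k), u j ≤ Ω) ∧
        v = ∑ j ∈ Finset.univ.filter (fun j : Fin n => (j : ℕ) < k),
          (γ j + β j * u j)} PR)
    (Pmax : ℝ)
    (hPmax : IsGreatest {v : ℝ | ∃ j : Fin n, v = γ j + β j * u j} Pmax)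
    (Pmin : ℝ) (hPmin : Pmin = max Pmax PR) :
    Pmin ≤ Pstar ∧ Pstar ≤ 2 * Pmin := by
  classical
  set d : Fin n → ℝ := fun j => (γ j + β j * u j) / u j with hd_def
  have hd_pos : ∀ j, 0 < d j := fun j => div_pos (hpos j) (hu j)
  have hdu : ∀ j, d j * u j = γ j + β j * u j := fun j =>
    div_mul_cancel₀ _ (hu j).ne'
  -- helper to produce lower bounds on Pstar
  have hval : ∀ x : Fin n → ℝ, (∀ j, 0 ≤ x j ∧ x j ≤ u j) → (∑ j, x j) ≤ Ω →
      (∑ j, max (γ j + β j * x j) 0) ≤ Pstar := fun x hx hs =>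
    hPstar.2 ⟨x, ⟨hx, hs⟩, rfl⟩
  -- Pmax ≥ 0
  have hPmax_pos : 0 < Pmax := by
    have := hPmax.2 ⟨(⟨0, hn⟩ : Fin n), rfl⟩
    exact lt_of_lt_of_le (hpos ⟨0, hn⟩) this
  -- Lower bound 1 : Pmax ≤ Pstar
  have hPmax_le : Pmax ≤ Pstar := by
    obtain ⟨j, hj⟩ := hPmax.1
    set x : Fin n → ℝ := fun i => if i = j then u j else 0 with hxdef
    have hfeas : ∀ i, 0 ≤ x i ∧ x i ≤ u i := by
      intro i
      by_cases h : i = j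
      · subst h; simp [hxdef, (hu i).le]
      · simp [hxdef, h, (hu i).le]
    have hsum : (∑ i, x i) ≤ Ω := by
      have : (∑ i, x i) = u j := by simp [hxdef]
      rw [this]; exact huΩ j
    have hv : (∑ i, max (γ i + β i * x i) 0) = γ j + β j * u j := by
      rw [Finset.sum_eq_single j]
      · simp [hxdef, max_eq_left (hpos j).le]
      · intro i _ hij
        simp [hxdef, hij, max_eq_right (hγ i)]
      · intro h; exact absurd (Finset.mem_univ j) h
    rw [hj]
    calc γ j + β j * u j = ∑ i, max (γ i + β i * x i) 0 := hv.symm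
      _ ≤ Pstar := hval x hfeas hsum
  -- Lower bound 2 : PR ≤ Pstar
  have hPR_le : PR ≤ Pstar := by
    obtain ⟨k, hkn, hSk, hPRval⟩ := hPR.1
    set x : Fin n → ℝ := fun j => if (j : ℕ) < k then u j else 0 with hxdef
    have hfeas : ∀ i, 0 ≤ x i ∧ x i ≤ u i := by
      intro i
      by_cases h : (i : ℕ) < k
      · simp [hxdef, h, (hu i).le]
      · simp [hxdef, h, (hu i).le]
    have hsum : (∑ i, x i) ≤ Ω := by
      have : (∑ i, x i)
          = ∑ j ∈ Finset.univ.filter (fun j : Fin n => (j : ℕ) < k), u j := by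
        rw [Finset.sum_filter]
      rw [this]; exact hSk
    have hv : (∑ i, max (γ i + β i * x i) 0)
        = ∑ j ∈ Finset.univ.filter (fun j : Fin n => (j : ℕ) < k),
            (γ j + β j * u j) := by
      rw [Finset.sum_filter]
      refine Finset.sum_congr rfl fun i _ => ?_
      by_cases h : (i : ℕ) < k
      · simp [hxdef, h, max_eq_left (hpos i).le]
      · simp [hxdef, h, max_eq_right (hγ i)]
    rw [hPRval]
    calc (∑ j ∈ Finset.univ.filter (fun j : Fin n => (j : ℕ) < k),
            (γ j + β j * u j)) = ∑ i, max (γ i + β i * x i) 0 := hv.symm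
      _ ≤ Pstar := hval x hfeas hsum
  have hlow : Pmin ≤ Pstar := by
    rw [hPmin]; exact max_le hPmax_le hPR_le
  refine ⟨hlow, ?_⟩
  -- Upper bound
  have hPmaxmin : Pmax ≤ Pmin := by rw [hPmin]; exact le_max_left _ _
  have hPRmin : PR ≤ Pmin := by rw [hPmin]; exact le_max_right _ _
  obtain ⟨x, ⟨hx, hsum⟩, hPeq⟩ := hPstar.1
  simp only at hPeq
  set S : ℕ → ℝ :=
    fun m => ∑ j ∈ Finset.univ.filter (fun j : Fin n => (j : ℕ) < m), u j
    with hS_def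
  set P : ℕ → ℝ :=
    fun m => ∑ j ∈ Finset.univ.filter (fun j : Fin n => (j : ℕ) < m),
      (γ j + β j * u j) with hP_def
  have hSsucc : ∀ (m : ℕ) (hm : m < n), S (m + 1) = S m + u ⟨m, hm⟩ := by
    intro m hm
    have hins : Finset.univ.filter (fun j : Fin n => (j : ℕ) < m + 1)
        = insert (⟨m, hm⟩ : Fin n)
            (Finset.univ.filter (fun j : Fin n => (j : ℕ) < m)) := by
      ext j
      simp [Fin.ext_iff]
      omega
    rw [hS_def]
    simp only
    rw [hins, Finset.sum_insert (by simp)]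
    ring
  -- the density bound on each profit term
  have hub1 : Pstar ≤ ∑ j, d j * x j := by
    rw [← hPeq]
    refine Finset.sum_le_sum fun j _ => ?_
    refine max_le ?_ (mul_nonneg (hd_pos j).le (hx j).1)
    rw [hd_def]
    rw [div_mul_eq_mul_div, le_div_iff₀ (hu j)]
    nlinarith [hγ j, (hx j).1, (hx j).2, (hβ j).le, hu j]
  -- choose the greedy index k
  set k : ℕ := Nat.findGreatest (fun m => S m ≤ Ω) n with hk_def
  have hS0 : S 0 ≤ Ω := by
    rw [hS_def]; simp [hΩ.le]
  have hkn : k ≤ n := Nat.findGreatest_le n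
  have hSk : S k ≤ Ω := Nat.findGreatest_spec (P := fun m => S m ≤ Ω) (Nat.zero_le n) hS0
  have hPk_le_PR : P k ≤ PR := hPR.2 ⟨k, hkn, hSk, rfl⟩
  rcases eq_or_lt_of_le hkn with hkeq | hklt
  · -- k = n : everything fits
    have huniv : Finset.univ.filter (fun j : Fin n => (j : ℕ) < n)
        = Finset.univ := by
      ext j; simp [j.isLt]
    have : (∑ j, d j * x j) ≤ P n := by
      rw [hP_def]
      simp only
      rw [huniv]
      refine Finset.sum_le_sum fun j _ => ?_
      rw [← hdu j]
      exact mul_le_mul_of_nonneg_left (hx j).2 (hd_pos j).le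
    rw [hkeq] at hPk_le_PR
    linarith
  · -- k < n
    set kf : Fin n := ⟨k, hklt⟩ with hkf_def
    have hnot : ¬ S (k + 1) ≤ Ω :=
      Nat.findGreatest_is_greatest (Nat.lt_succ_self k) hklt
    have hΩlt : Ω < S k + u kf := by
      rw [← hSsucc k hklt]; exact lt_of_not_ge hnot
    set F : Finset (Fin n) := Finset.univ.filter (fun j : Fin n => (j : ℕ) < k)
      with hF_def
    have hsplit : (∑ j, d j * x j)
        = (∑ j ∈ F, d j * x j)
          + ∑ j ∈ Finset.univ.filter (fun j : Fin n => ¬ (j : ℕ) < k),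
              d j * x j := by
      rw [hF_def, Finset.sum_filter_add_sum_filter_not]
    have hA : (∑ j ∈ F, d j * x j)
        ≤ P k + d kf * ((∑ j ∈ F, x j) - S k) := by
      have h1 : (∑ j ∈ F, d j * x j)
          ≤ ∑ j ∈ F, (d j * u j + d kf * (x j - u j)) := by
        refine Finset.sum_le_sum fun j hj => ?_
        have hjk : (j : ℕ) < k := by
          rw [hF_def] at hj; simpa using hj
        have hdk : d kf ≤ d j := hdens j kf (le_of_lt hjk)
        nlinarith [(hx j).2, hdk]
      have h2 : (∑ j ∈ F, (d j * u j + d kf * (x j - u j)))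
          = P k + d kf * ((∑ j ∈ F, x j) - S k) := by
        rw [Finset.sum_add_distrib, ← Finset.mul_sum, Finset.sum_sub_distrib]
        rw [hP_def, hS_def]
        simp only
        rw [← hF_def]
        rw [Finset.sum_congr rfl fun j _ => hdu j]
      linarith
    have hB : (∑ j ∈ Finset.univ.filter (fun j : Fin n => ¬ (j : ℕ) < k),
          d j * x j)
        ≤ d kf * ∑ j ∈ Finset.univ.filter (fun j : Fin n => ¬ (j : ℕ) < k),
            x j := by
      rw [Finset.mul_sum]
      refine Finset.sum_le_sum fun j hj => ?_
      have hjk : ¬ (j : ℕ) < k := by simpa using hj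
      have hdk : d j ≤ d kf := hdens kf j (by
        simp only [Fin.le_def]
        exact Nat.le_of_not_lt hjk)
      exact mul_le_mul_of_nonneg_right hdk (hx j).1
    have hT : (∑ j ∈ F, x j)
        + (∑ j ∈ Finset.univ.filter (fun j : Fin n => ¬ (j : ℕ) < k), x j)
        = ∑ j, x j := by
      rw [hF_def, Finset.sum_filter_add_sum_filter_not]
    have hcap : ((∑ j ∈ F, x j) - S k)
        + (∑ j ∈ Finset.univ.filter (fun j : Fin n => ¬ (j : ℕ) < k), x j)
        ≤ u kf := by linarith
    have hmul : d kf * (((∑ j ∈ F, x j) - S k)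
        + ∑ j ∈ Finset.univ.filter (fun j : Fin n => ¬ (j : ℕ) < k), x j)
        ≤ d kf * u kf := mul_le_mul_of_nonneg_left hcap (hd_pos kf).le
    rw [mul_add] at hmul
    have hdkf : d kf * u kf ≤ Pmax := by
      rw [hdu kf]; exact hPmax.2 ⟨kf, rfl⟩
    linarith
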